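/- Let M be an n×d real matrix and G an n×s real matrix with GᵀMMᵀG positive definite. For v ∈ ℝⁿ set λ := −(GᵀMMᵀG)⁻¹GᵀMMᵀv and d_k := −(d/n)·MᵀG(GᵀMMᵀG)⁻¹[−λ]₊, where [a]₊ is the componentwise positive part. Then ⟨v, M d_k⟩ = −(d/n)·‖[−λ]₊‖². In particular, if [−λ]₊ ≠ 0 then M d_k is a descent direction for any function whose gradient at the current point equals v. -/

import Mathlib

open Matrix InnerProductSpace

/-- Apply a real matrix to a vector of the corresponding Euclidean space. -/
noncomputable def mulVecE {m n : Type*} [Fintype n] (A : Matrix m n ℝ)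
    (v : EuclideanSpace ℝ n) : EuclideanSpace ℝ m :=
  (WithLp.equiv 2 (m → ℝ)).symm (A.mulVec ((WithLp.equiv 2 (n → ℝ)) v))

/-- `Z = I - MᵀG(GᵀMMᵀG)⁻¹GᵀM`. -/
noncomputable def Zmat {n d s : Type*} [Fintype n] [Fintype d] [DecidableEq d] [Fintype s]
    [DecidableEq s] (M : Matrix n d ℝ) (G : Matrix n s ℝ) : Matrix d d ℝ :=
  1 - Mᵀ * G * (Gᵀ * M * Mᵀ * G)⁻¹ * Gᵀ * M

/-- `λ(v) = -(GᵀMMᵀG)⁻¹GᵀMMᵀv`. -/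
noncomputable def lamVec {n d s : Type*} [Fintype n] [Fintype d] [Fintype s] [DecidableEq s]
    (M : Matrix n d ℝ) (G : Matrix n s ℝ) (v : EuclideanSpace ℝ n) : EuclideanSpace ℝ s :=
  -(mulVecE ((Gᵀ * M * Mᵀ * G)⁻¹ * Gᵀ * M * Mᵀ) v)

/-- Componentwise positive part `[a]₊`. -/
noncomputable def posPartE {s : Type*} (a : EuclideanSpace ℝ s) : EuclideanSpace ℝ s :=
  (WithLp.equiv 2 (s → ℝ)).symm (fun i => max ((WithLp.equiv 2 (s → ℝ)) a i) 0)

/-- Smallest eigenvalue of a (symmetric) real matrix. -/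
noncomputable def lambdaMin {s : Type*} [Fintype s] (A : Matrix s s ℝ) : ℝ :=
  sInf {r : ℝ | ∃ v : s → ℝ, v ≠ 0 ∧ A.mulVec v = r • v}

theorem stmt2 {n d s : ℕ} (hn : 0 < n) (hd : 0 < d) (hs : 0 < s)
    (M : Matrix (Fin n) (Fin d) ℝ) (G : Matrix (Fin n) (Fin s) ℝ)
    (hpd : (Gᵀ * M * Mᵀ * G).PosDef)
    (v : EuclideanSpace ℝ (Fin n))
    (dk : EuclideanSpace ℝ (Fin d))
    (hdk : dk = -(((d : ℝ) / n) •
        mulVecE (Mᵀ * G * (Gᵀ * M * Mᵀ * G)⁻¹) (posPartE (-(lamVec M G v))))) :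
    ⟪v, mulVecE M dk⟫_ℝ = -((d : ℝ) / n) * ‖posPartE (-(lamVec M G v))‖ ^ 2 ∧
    (posPartE (-(lamVec M G v)) ≠ 0 → ⟪v, mulVecE M dk⟫_ℝ < 0) := by
  set A := Gᵀ * M * Mᵀ * G with hA
  have hAu : IsUnit A.det := isUnit_iff_ne_zero.mpr (ne_of_gt hpd.det_pos)
  have hAsymm : Aᵀ = A := hpd.1
  have hAinv : (A⁻¹)ᵀ = A⁻¹ := by
    rw [Matrix.transpose_nonsing_inv, hAsymm]
  set q : Fin s → ℝ := (A⁻¹ * Gᵀ * M * Mᵀ).mulVec v with hq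
  have hp : posPartE (-(lamVec M G v)) = (WithLp.equiv 2 (Fin s → ℝ)).symm
      (fun i => max (q i) 0) := by
    simp only [posPartE, lamVec, mulVecE, hq, ← hA, neg_neg]
    rfl
  set p : Fin s → ℝ := fun i => max (q i) 0 with hpdef
  set c := (d : ℝ) / n with hc
  -- main computation
  have hmain : ⟪v, mulVecE M dk⟫_ℝ = -c * ∑ i, p i * p i := by
    have hdkfun : (WithLp.equiv 2 (Fin d → ℝ)) dk = -(c • ((Mᵀ * G * A⁻¹) *ᵥ p)) := by
      rw [hdk, hp]; rfl
    have h2 : ⟪v, mulVecE M dk⟫_ℝ = v ⬝ᵥ (M *ᵥ ((WithLp.equiv 2 (Fin d → ℝ)) dk)) := by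
      simp [mulVecE, PiLp.inner_apply, dotProduct]
      exact Finset.sum_congr rfl fun _ _ => mul_comm _ _
    have hdk' : M.mulVec (-(c • ((Mᵀ * G * A⁻¹).mulVec p)))
        = -(c • ((M * (Mᵀ * G * A⁻¹)).mulVec p)) := by
      rw [Matrix.mulVec_neg, Matrix.mulVec_smul, Matrix.mulVec_mulVec]
    have hkey : v ⬝ᵥ ((M * (Mᵀ * G * A⁻¹)).mulVec p) = ∑ i, p i * p i := by
      rw [Matrix.dotProduct_mulVec, ← Matrix.mulVec_transpose]
      have hT : (M * (Mᵀ * G * A⁻¹))ᵀ = A⁻¹ * Gᵀ * M * Mᵀ := by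
        simp [Matrix.transpose_mul, hAinv, Matrix.mul_assoc]
      rw [hT, ← hq]
      unfold p
      simp only [dotProduct]
      refine Finset.sum_congr rfl fun i _ => ?_
      rcases le_or_gt (q i) 0 with h | h
      · simp [max_eq_right h]
      · simp [max_eq_left h.le]
    rw [h2, hdkfun, hdk', dotProduct_neg, dotProduct_smul, smul_eq_mul, hkey]
    ring
  have hnorm : ‖posPartE (-(lamVec M G v))‖ ^ 2 = ∑ i, p i * p i := by
    rw [hp, ← real_inner_self_eq_norm_sq]
    simp [PiLp.inner_apply]
    rw [EuclideanSpace.norm_sq_eq]; simp [sq]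
  have hcpos : 0 < c := div_pos (by exact_mod_cast hd) (by exact_mod_cast hn)
  refine ⟨by rw [hmain, hnorm], fun hne => ?_⟩
  have hpne : p ≠ 0 := by
    intro h
    apply hne
    rw [hp, h]
    rfl
  obtain ⟨i, hi⟩ := Function.ne_iff.mp hpne
  have hSpos : 0 < ∑ i, p i * p i :=
    Finset.sum_pos' (fun j _ => mul_self_nonneg _)
      ⟨i, Finset.mem_univ i, mul_self_pos.mpr hi⟩
  rw [hmain]
  nlinarith
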